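/- For real κ with 0<κ<1/2, ∫₀^∞ t·exp_κ(-t) dt = 1/(1-4κ²). -/

import Mathlib

noncomputable def kexp (κ x : ℝ) : ℝ :=
  (Real.sqrt (1 + κ^2 * x^2) + κ*x) ^ (1/κ : ℝ)

open Real MeasureTheory Filter Set

theorem kexp_integral_t (κ : ℝ) (h0 : 0 < κ) (h1 : κ < 1/2) :
    ∫ t in Set.Ioi (0:ℝ), t * kexp κ (-t) = 1/(1 - 4*κ^2) := by
  have hκ : κ ≠ 0 := h0.ne'
  have h2κ1 : 2*κ - 1 ≠ 0 := by intro h; linarith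
  have h2κ1' : 2*κ + 1 ≠ 0 := by positivity
  set s : ℝ → ℝ := fun t => Real.sqrt (1 + κ^2 * t^2) with hs
  set w : ℝ → ℝ := fun t => s t + κ * t with hw
  have hspos : ∀ t, 0 < s t := fun t => Real.sqrt_pos.mpr (by positivity)
  have hssq : ∀ t, s t ^ 2 = 1 + κ^2 * t^2 := fun t => Real.sq_sqrt (by positivity)
  have hslt : ∀ t : ℝ, |κ * t| < s t := by
    intro t
    have h : |κ * t| = Real.sqrt ((κ*t)^2) := (Real.sqrt_sq_eq_abs _).symm
    rw [h]
    apply Real.sqrt_lt_sqrt (by positivity)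
    nlinarith
  have hwpos : ∀ t, 0 < w t := by
    intro t
    have h := hslt t
    have h2 := neg_abs_le (κ * t)
    simp only [hw]
    nlinarith [hspos t]
  have hwinv : ∀ t, (w t)⁻¹ = s t - κ * t := by
    intro t
    refine inv_eq_of_mul_eq_one_right ?_
    simp only [hw]
    linear_combination hssq t
  -- kexp in terms of w
  have hkexp : ∀ t, kexp κ (-t) = w t ^ (-(1/κ) : ℝ) := by
    intro t
    have hbase : Real.sqrt (1 + κ^2 * (-t)^2) + κ * (-t) = (w t)⁻¹ := by
      rw [hwinv t]; simp only [hs]; ring_nf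
    rw [kexp, hbase, Real.inv_rpow (hwpos t).le, ← Real.rpow_neg (hwpos t).le]
  -- derivative of w
  have hw' : ∀ t, HasDerivAt w (κ * w t / s t) t := by
    intro t
    have hu : HasDerivAt (fun t : ℝ => 1 + κ^2 * t^2) (κ^2 * (2*t)) t := by
      simpa using ((hasDerivAt_pow 2 t).const_mul (κ^2)).const_add 1
    have hsd : HasDerivAt s (κ^2 * (2*t) / (2 * s t)) t := hu.sqrt (by positivity)
    have := hsd.add ((hasDerivAt_id t).const_mul κ)
    refine this.congr_deriv ?_
    have := (hspos t).ne'
    field_simp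
    ring
  -- derivative of powers of w
  have hpow : ∀ (p : ℝ) (t : ℝ),
      HasDerivAt (fun t => w t ^ p) (p * κ / s t * w t ^ p) t := by
    intro p t
    have := (hw' t).rpow_const (p := p) (Or.inl (hwpos t).ne')
    convert this using 1
    rw [Real.rpow_sub_one (hwpos t).ne' p]
    have h1 := (hspos t).ne'
    have h2 := (hwpos t).ne'
    field_simp
  set F : ℝ → ℝ := fun t => (1/(4*κ)) *
    (w t ^ (2 - 1/κ : ℝ) / (2*κ - 1) + w t ^ (-(2 + 1/κ) : ℝ) / (2*κ + 1)) with hF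
  have hF' : ∀ t, HasDerivAt F (t * kexp κ (-t)) t := by
    intro t
    have d := (((hpow (2-1/κ) t).div_const (2*κ-1)).add
      ((hpow (-(2+1/κ)) t).div_const (2*κ+1))).const_mul (1/(4*κ))
    refine d.congr_deriv ?_
    have e1 : w t ^ (2 - 1/κ : ℝ) = (w t)^2 * w t ^ (-(1/κ) : ℝ) := by
      rw [show (2 - 1/κ : ℝ) = ((2:ℕ):ℝ) + (-(1/κ)) by push_cast; ring,
        Real.rpow_add (hwpos t), Real.rpow_natCast]
    have e2 : w t ^ (-(2 + 1/κ) : ℝ) = (s t - κ*t)^2 * w t ^ (-(1/κ) : ℝ) := by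
      rw [show (-(2 + 1/κ) : ℝ) = (-((2:ℕ):ℝ)) + (-(1/κ)) by push_cast; ring,
        Real.rpow_add (hwpos t), Real.rpow_neg (hwpos t).le, Real.rpow_natCast,
        ← inv_pow, hwinv t]
    rw [hkexp t, e1, e2]
    have h1 := (hspos t).ne'
    have h5 : κ*2 - 1 ≠ 0 := by intro h; linarith
    simp only [hw]
    field_simp
    ring
  have hwtop : Tendsto w atTop atTop := by
    refine tendsto_atTop_mono (fun t => ?_) (Tendsto.const_mul_atTop h0 tendsto_id)
    simp only [hw, id]
    nlinarith [Real.sqrt_nonneg (1 + κ^2 * t^2)]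
  have hexp1 : (0:ℝ) < 1/κ - 2 := by
    have : (2:ℝ) < 1/κ := (lt_div_iff₀ h0).mpr (by linarith)
    linarith
  have t1 : Tendsto (fun t => w t ^ (2 - 1/κ : ℝ)) atTop (nhds 0) := by
    have := (tendsto_rpow_neg_atTop hexp1).comp hwtop
    simpa [Function.comp_def, show -(1/κ - 2) = 2 - 1/κ by ring] using this
  have t2 : Tendsto (fun t => w t ^ (-(2 + 1/κ) : ℝ)) atTop (nhds 0) := by
    have hp : (0:ℝ) < 2 + 1/κ := by positivity
    exact (tendsto_rpow_neg_atTop hp).comp hwtop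
  have hFtop : Tendsto F atTop (nhds 0) := by
    have h := ((t1.div_const (2*κ-1)).add (t2.div_const (2*κ+1))).const_mul (1/(4*κ))
    have h0' : (0:ℝ) = 1/(4*κ) * (0/(2*κ-1) + 0/(2*κ+1)) := by simp
    rw [hF, h0']
    exact h
  have hnonneg : ∀ x ∈ Set.Ioi (0:ℝ), 0 ≤ x * kexp κ (-x) := by
    intro x hx
    rw [hkexp x]
    exact mul_nonneg (le_of_lt hx) (Real.rpow_nonneg (hwpos x).le _)
  have key := integral_Ioi_of_hasDerivAt_of_nonneg' (fun x _ => hF' x) hnonneg hFtop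
  rw [key]
  have hw0 : w 0 = 1 := by simp [hw, hs]
  have h4 : 1 - 4*κ^2 ≠ 0 := by nlinarith
  rw [hF]
  simp only [hw0, Real.one_rpow]
  field_simp
  have h5 : κ*2 - 1 ≠ 0 := by intro h; linarith
  field_simp
  ring
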